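/- The Reed-Muller code RM(r,m), defined as the span of evaluation vectors of all monomials of degree at most r in m variables, has dimension Σ_{i=0}^{r} binomial(m,i) and minimum distance 2^{m−r}. -/

import Mathlib

/-- Evaluation vector of a multilinear monomial (a subset of `Fin m`). -/
def evalMon (m : ℕ) (g : Finset (Fin m)) (x : Fin m → ZMod 2) : ZMod 2 :=
  ∏ i ∈ g, x i

/-- The monomial code generated by a set `M` of monomials. -/
def monomialCode (m : ℕ) (M : Set (Finset (Fin m))) :
    Submodule (ZMod 2) ((Fin m → ZMod 2) → ZMod 2) :=
  Submodule.span (ZMod 2) ((fun g => evalMon m g) '' M)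

/-- The Reed–Muller code `RM(r,m)`: span of evaluation vectors of all monomials of
degree at most `r` in `m` variables. -/
def RM (r m : ℕ) : Submodule (ZMod 2) ((Fin m → ZMod 2) → ZMod 2) :=
  monomialCode m {g | g.card ≤ r}

open Finset

lemma zmod2_ne_zero_iff : ∀ a : ZMod 2, a ≠ 0 ↔ a = 1 := by decide

/-- Counting: the number of points agreeing with `a` on `g` is `2^(m - |g|)`. -/
lemma card_agree (m : ℕ) (g : Finset (Fin m)) (a : ZMod 2) :
    (Finset.univ.filter fun x : Fin m → ZMod 2 => ∀ i ∈ g, x i = a).card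
      = 2 ^ (m - g.card) := by
  rw [← Fintype.card_subtype]
  rw [Fintype.card_congr (Equiv.subtypePiEquivPi (p := fun i (b : ZMod 2) => i ∈ g → b = a))]
  rw [Fintype.card_pi]
  have h1 : ∀ i : Fin m, Fintype.card {b : ZMod 2 // i ∈ g → b = a}
      = if i ∈ g then 1 else 2 := by
    intro i
    by_cases hi : i ∈ g
    · simp only [hi, if_true]
      rw [Fintype.card_congr (Equiv.subtypeEquivRight (q := fun b => b = a) (by simp [hi]))]
      exact Fintype.card_subtype_eq a
    · simp only [hi, if_false]
      rw [Fintype.card_congr (Equiv.subtypeEquivRight (q := fun _ => True) (by simp [hi])),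
        Fintype.card_congr (Equiv.subtypeUnivEquiv fun _ => trivial), ZMod.card 2]
  rw [Finset.prod_congr rfl fun i _ => h1 i]
  rw [← Finset.prod_sdiff (Finset.subset_univ g)]
  have h2 : ∏ i ∈ g, (if i ∈ g then (1:ℕ) else 2) = 1 :=
    Finset.prod_eq_one fun i hi => by simp [hi]
  have h3 : ∏ i ∈ Finset.univ \ g, (if i ∈ g then (1:ℕ) else 2) = 2 ^ (m - g.card) := by
    have hc : ∀ i ∈ Finset.univ \ g, (if i ∈ g then (1:ℕ) else 2) = 2 := by
      intro i hi
      rw [Finset.mem_sdiff] at hi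
      simp [hi.2]
    rw [Finset.prod_congr rfl hc, Finset.prod_const,
      Finset.card_sdiff_of_subset (Finset.subset_univ g), Finset.card_univ, Fintype.card_fin]
  rw [h2, h3, mul_one]

/-- Key: if a linear combination of monomial evaluation vectors vanishes as a function,
all coefficients vanish. -/
lemma coeff_eq_zero (m : ℕ) (c : Finset (Fin m) → ZMod 2)
    (h : ∀ x, ∑ g : Finset (Fin m), c g * evalMon m g x = 0) : ∀ g, c g = 0 := by
  suffices H : ∀ n (g : Finset (Fin m)), g.card = n → c g = 0 by
    intro g; exact H g.card g rfl
  intro n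
  induction n using Nat.strong_induction_on with
  | _ n ih =>
    intro g hg
    have hx := h (fun i => if i ∈ g then 1 else 0)
    have he : ∀ h : Finset (Fin m),
        evalMon m h (fun i => if i ∈ g then 1 else 0) = if h ⊆ g then 1 else 0 := by
      intro h
      by_cases hh : h ⊆ g
      · simp only [hh, if_true, evalMon]
        exact Finset.prod_eq_one fun i hi => by simp [hh hi]
      · obtain ⟨i, hih, hig⟩ := Finset.not_subset.mp hh
        simp only [hh, if_false, evalMon]
        exact Finset.prod_eq_zero hih (by simp [hig])
    rw [Finset.sum_congr rfl (fun h _ => by rw [he h])] at hx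
    simp only [mul_ite, mul_one, mul_zero] at hx
    rw [← Finset.sum_filter] at hx
    have hfil : (Finset.univ.filter fun h : Finset (Fin m) => h ⊆ g) = g.powerset := by
      ext h; simp
    rw [hfil] at hx
    rw [← Finset.add_sum_erase _ _ (Finset.mem_powerset_self g)] at hx
    have hz : ∑ h ∈ g.powerset.erase g, c h = 0 := by
      refine Finset.sum_eq_zero fun h hh => ?_
      rw [Finset.mem_erase, Finset.mem_powerset] at hh
      exact ih h.card (by rw [← hg]; exact Finset.card_lt_card (lt_of_le_of_ne hh.2 hh.1)) h rfl
    rw [hz, add_zero] at hx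
    exact hx

lemma evalMon_linearIndependent (m : ℕ) :
    LinearIndependent (ZMod 2) (fun g : Finset (Fin m) => evalMon m g) := by
  rw [Fintype.linearIndependent_iff]
  intro c hc
  refine coeff_eq_zero m c fun x => ?_
  have := congrFun hc x
  simpa [Finset.sum_apply] using this

lemma RM_eq_span_range (r m : ℕ) :
    RM r m = Submodule.span (ZMod 2)
      (Set.range fun g : {g : Finset (Fin m) // g.card ≤ r} => evalMon m g.1) := by
  unfold RM monomialCode
  congr 1
  ext v
  constructor
  · rintro ⟨g, hg, rfl⟩; exact ⟨⟨g, hg⟩, rfl⟩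
  · rintro ⟨⟨g, hg⟩, rfl⟩; exact ⟨g, hg, rfl⟩

lemma card_small (m r : ℕ) :
    Fintype.card {g : Finset (Fin m) // g.card ≤ r}
      = ∑ i ∈ Finset.range (r + 1), m.choose i := by
  rw [Fintype.card_subtype]
  rw [Finset.card_eq_sum_card_fiberwise (f := Finset.card) (t := Finset.range (r + 1))
    (fun g hg => by simp only [Finset.mem_coe, Finset.mem_filter] at hg; simp [Nat.lt_succ_iff, hg.2])]
  refine Finset.sum_congr rfl fun i hi => ?_
  rw [Finset.mem_range, Nat.lt_succ_iff] at hi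
  rw [Finset.filter_filter]
  have h1 : (Finset.univ.filter fun g : Finset (Fin m) => g.card ≤ r ∧ g.card = i)
      = Finset.univ.filter fun g => g.card = i := by
    refine Finset.filter_congr fun g _ => ?_
    constructor
    · exact fun h => h.2
    · exact fun h => ⟨h ▸ hi, h⟩
  rw [h1]
  have h2 : (Finset.univ.filter fun g : Finset (Fin m) => g.card = i)
      = Finset.powersetCard i Finset.univ := by
    rw [Finset.powersetCard_eq_filter, Finset.powerset_univ]
  rw [h2, Finset.card_powersetCard, Finset.card_univ, Fintype.card_fin]

/-- Lower bound on the weight of a nonzero codeword. -/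
lemma weight_lower (m r : ℕ) (c : Finset (Fin m) → ZMod 2)
    (hsupp : ∀ g, c g ≠ 0 → g.card ≤ r)
    (hne : (fun x => ∑ g : Finset (Fin m), c g * evalMon m g x) ≠ 0) :
    2 ^ (m - r) ≤ hammingNorm (fun x => ∑ g : Finset (Fin m), c g * evalMon m g x) := by
  set v := fun x => ∑ g : Finset (Fin m), c g * evalMon m g x with hv
  -- the support of c is nonempty
  have hcne : ∃ g, c g ≠ 0 := by
    by_contra hc
    push_neg at hc
    exact hne (funext fun x => by simp [hv, hc])
  obtain ⟨g0, hg0⟩ := hcne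
  have hsne : (Finset.univ.filter fun g : Finset (Fin m) => c g ≠ 0).Nonempty :=
    ⟨g0, by simp [hg0]⟩
  obtain ⟨g, hgmem, hgmax⟩ := Finset.exists_max_image _ Finset.card hsne
  rw [Finset.mem_filter] at hgmem
  have hcg : c g ≠ 0 := hgmem.2
  have hgr : g.card ≤ r := hsupp g hcg
  -- for each y vanishing on g, find a point in the support of v projecting to y
  have key : ∀ y : Fin m → ZMod 2, (∀ i ∈ g, y i = 0) →
      ∃ z : Fin m → ZMod 2, v (fun i => if i ∈ g then z i else y i) ≠ 0 := by
    intro y hy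
    by_contra hall
    push_neg at hall
    set d : Finset (Fin m) → ZMod 2 := fun s =>
      ∑ h ∈ Finset.univ.filter (fun h : Finset (Fin m) => h ∩ g = s),
        c h * ∏ i ∈ h \ g, y i with hd
    have hexp : ∀ z : Fin m → ZMod 2,
        v (fun i => if i ∈ g then z i else y i)
          = ∑ s : Finset (Fin m), d s * evalMon m s z := by
      intro z
      have hsplit : ∀ h : Finset (Fin m),
          evalMon m h (fun i => if i ∈ g then z i else y i)
            = (∏ i ∈ h ∩ g, z i) * ∏ i ∈ h \ g, y i := by
        intro h
        rw [evalMon, ← Finset.prod_inter_mul_prod_diff h g]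
        congr 1
        · exact Finset.prod_congr rfl fun i hi => by
            simp [Finset.mem_inter.mp hi |>.2]
        · exact Finset.prod_congr rfl fun i hi => by
            simp [Finset.mem_sdiff.mp hi |>.2]
      calc v (fun i => if i ∈ g then z i else y i)
          = ∑ h : Finset (Fin m), c h * ((∏ i ∈ h ∩ g, z i) * ∏ i ∈ h \ g, y i) := by
            simp only [hv]
            exact Finset.sum_congr rfl fun h _ => by rw [hsplit h]
        _ = ∑ s : Finset (Fin m), ∑ h ∈ Finset.univ.filter
              (fun h : Finset (Fin m) => h ∩ g = s),
              c h * ((∏ i ∈ h ∩ g, z i) * ∏ i ∈ h \ g, y i) := by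
            rw [Finset.sum_fiberwise_of_maps_to (fun h _ => Finset.mem_univ _)]
        _ = ∑ s : Finset (Fin m), d s * evalMon m s z := by
            refine Finset.sum_congr rfl fun s _ => ?_
            rw [hd, evalMon, Finset.sum_mul]
            refine Finset.sum_congr rfl fun h hh => ?_
            rw [Finset.mem_filter] at hh
            rw [← hh.2]
            ring
    have hdz : ∀ s, d s = 0 := by
      refine coeff_eq_zero m d fun z => ?_
      rw [← hexp z]
      exact hall z
    have hdg : d g = c g := by
      have hrfl : d g = ∑ h ∈ Finset.univ.filter (fun h : Finset (Fin m) => h ∩ g = g),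
          c h * ∏ i ∈ h \ g, y i := rfl
      rw [hrfl, Finset.sum_eq_single g]
      · simp
      · intro h hh hne'
        rw [Finset.mem_filter] at hh
        have hgsub : g ⊆ h := Finset.inter_eq_right.mp hh.2
        have : g.card < h.card := Finset.card_lt_card (lt_of_le_of_ne hgsub (Ne.symm hne'))
        have hch : c h = 0 := by
          by_contra hch
          exact absurd (hgmax h (by simp [hch])) (not_le.mpr this)
        simp [hch]
      · intro hg'
        exact absurd (by simp [Finset.inter_eq_right] : g ∈ Finset.univ.filter
          fun h : Finset (Fin m) => h ∩ g = g) hg'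
    exact hcg (by rw [← hdg]; exact hdz g)
  -- surjectivity of projection from support of v onto {y | y = 0 on g}
  have hsurj : Set.SurjOn (fun (x : Fin m → ZMod 2) (i : Fin m) => if i ∈ g then (0 : ZMod 2) else x i)
      ↑(Finset.univ.filter fun x : Fin m → ZMod 2 => v x ≠ 0)
      ↑(Finset.univ.filter fun y : Fin m → ZMod 2 => ∀ i ∈ g, y i = 0) := by
    intro y hy
    simp only [Finset.coe_filter, Set.mem_setOf_eq, Finset.mem_univ, true_and] at hy
    obtain ⟨z, hz⟩ := key y hy
    refine ⟨fun i => if i ∈ g then z i else y i, ?_, ?_⟩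
    · simp only [Finset.coe_filter, Set.mem_setOf_eq, Finset.mem_univ, true_and]
      exact hz
    · funext i
      by_cases hi : i ∈ g <;> simp [hi]
      exact (hy i hi).symm
  have hcard := Finset.card_le_card_of_surjOn _ hsurj
  rw [card_agree m g 0] at hcard
  have hnorm : hammingNorm v = (Finset.univ.filter fun x : Fin m → ZMod 2 => v x ≠ 0).card := by
    rfl
  calc 2 ^ (m - r) ≤ 2 ^ (m - g.card) :=
        Nat.pow_le_pow_right (by norm_num) (Nat.sub_le_sub_left hgr m)
    _ ≤ _ := by rw [hnorm]; exact hcard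

/-- `RM(r,m)` has dimension `∑_{i=0}^r C(m,i)` and minimum distance `2^{m−r}`. -/
theorem RM_dim_and_min_distance (m r : ℕ) (hr : r ≤ m) :
    Module.finrank (ZMod 2) (RM r m) = ∑ i ∈ Finset.range (r + 1), m.choose i ∧
    IsLeast {w : ℕ | ∃ v ∈ RM r m, v ≠ 0 ∧ hammingNorm v = w} (2 ^ (m - r)) := by
  have hli := evalMon_linearIndependent m
  constructor
  · -- dimension
    rw [RM_eq_span_range]
    have h2 : LinearIndependent (ZMod 2)
        (fun g : {g : Finset (Fin m) // g.card ≤ r} => evalMon m g.1) :=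
      hli.comp Subtype.val Subtype.val_injective
    rw [finrank_span_eq_card h2]
    exact card_small m r
  constructor
  · -- 2^(m-r) is achieved
    set g0 : Finset (Fin m) := Finset.univ.map (Fin.castLEEmb hr) with hg0
    have hcard0 : g0.card = r := by
      rw [hg0, Finset.card_map, Finset.card_univ, Fintype.card_fin]
    refine ⟨evalMon m g0, ?_, ?_, ?_⟩
    · exact Submodule.subset_span ⟨g0, by simp [hcard0], rfl⟩
    · intro h0
      have := congrFun h0 (fun _ => 1)
      simp [evalMon] at this
    · show (Finset.univ.filter fun x : Fin m → ZMod 2 => evalMon m g0 x ≠ 0).card = _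
      have : (Finset.univ.filter fun x : Fin m → ZMod 2 => evalMon m g0 x ≠ 0)
          = Finset.univ.filter fun x => ∀ i ∈ g0, x i = 1 := by
        refine Finset.filter_congr fun x _ => ?_
        rw [evalMon, Finset.prod_ne_zero_iff]
        constructor
        · exact fun h i hi => (zmod2_ne_zero_iff (x i)).mp (h i hi)
        · exact fun h i hi => (zmod2_ne_zero_iff (x i)).mpr (h i hi)
      rw [this, card_agree, hcard0]
  · -- lower bound
    rintro w ⟨v, hvmem, hvne, rfl⟩
    rw [RM_eq_span_range] at hvmem
    rw [Submodule.mem_span_range_iff_exists_fun] at hvmem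
    obtain ⟨cc, hcc⟩ := hvmem
    set c : Finset (Fin m) → ZMod 2 := fun g =>
      if hg : g.card ≤ r then cc ⟨g, hg⟩ else 0 with hc
    have hveq : v = fun x => ∑ g : Finset (Fin m), c g * evalMon m g x := by
      rw [← hcc]
      funext x
      rw [Finset.sum_apply]
      have step1 : ∑ g : Finset (Fin m), c g * evalMon m g x
          = ∑ g ∈ Finset.univ.filter (fun g : Finset (Fin m) => g.card ≤ r),
              c g * evalMon m g x := by
        rw [Finset.sum_filter]
        refine Finset.sum_congr rfl fun g _ => ?_
        by_cases hg : g.card ≤ r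
        · simp [hg]
        · simp [hc, hg]
      rw [step1, Finset.sum_subtype (p := fun g : Finset (Fin m) => g.card ≤ r)
        (Finset.univ.filter fun g : Finset (Fin m) => g.card ≤ r)
        (fun g => by simp) (fun g => c g * evalMon m g x)]
      refine Finset.sum_congr rfl fun g _ => ?_
      simp [hc, g.2, smul_eq_mul]
    have hsupp : ∀ g, c g ≠ 0 → g.card ≤ r := by
      intro g hg
      by_contra hgr
      exact hg (by simp [hc, hgr])
    rw [hveq]
    exact weight_lower m r c hsupp (hveq ▸ hvne)
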